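/- Let Δ_n = n^{1/4}/√π · exp(-√n (x - g)²) dx be a Gaussian density with mean g and variance 1/(2√n). If g = g_n converges in distribution to N(u, s²) with convergence in total variation at rate r_n, then the convolution with Δ_n (the randomized variable) converges in total variation to N(u, s²) at rate O(r_n + n^{-1/4}). -/

import Mathlib

open MeasureTheory ProbabilityTheory

open Real Set Filter
open scoped NNReal ENNReal

lemma aux_gpdf_le (a : ℝ) (V : ℝ≥0) (x : ℝ) :
    gaussianPDFReal a V x ≤ (Real.sqrt (2 * π * V))⁻¹ := by
  unfold gaussianPDFReal
  have h1 : Real.exp (-(x - a) ^ 2 / (2 * V)) ≤ 1 := by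
    rw [Real.exp_le_one_iff]
    apply div_nonpos_of_nonpos_of_nonneg (neg_nonpos.2 (sq_nonneg _)) (by positivity)
  exact mul_le_of_le_one_right (inv_nonneg.2 (Real.sqrt_nonneg _)) h1

lemma aux_gpdf_mono {a b : ℝ} (V : ℝ≥0) {x : ℝ} (h : (x - a) ^ 2 ≤ (x - b) ^ 2) :
    gaussianPDFReal b V x ≤ gaussianPDFReal a V x := by
  unfold gaussianPDFReal
  apply mul_le_mul_of_nonneg_left _ (inv_nonneg.2 (Real.sqrt_nonneg _))
  apply Real.exp_le_exp.2
  apply div_le_div_of_nonneg_right ?_ (by positivity)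
  linarith

lemma aux_int_Ioi {b : ℝ} (hb : 0 < b) :
    ∫ x in Set.Ioi (0:ℝ), x * Real.exp (-b * x ^ 2) = (2 * b)⁻¹ := by
  have A : ∀ x ∈ Set.Ici (0:ℝ), HasDerivAt (fun x => -(2 * b)⁻¹ * Real.exp (-b * x ^ 2))
      (x * Real.exp (-b * x ^ 2)) x := by
    intro x _
    have h := (((hasDerivAt_pow 2 x).const_mul (-b)).exp.const_mul (-(2 * b)⁻¹))
    refine h.congr_deriv ?_
    field_simp
    ring
  have B : Tendsto (fun y : ℝ => -(2 * b)⁻¹ * Real.exp (-b * y ^ 2)) atTop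
      (nhds (-(2 * b)⁻¹ * 0)) := by
    refine Tendsto.const_mul _ ?_
    exact Real.tendsto_exp_atBot.comp
      ((tendsto_pow_atTop two_ne_zero).const_mul_atTop_of_neg (neg_lt_zero.2 hb))
  have := integral_Ioi_of_hasDerivAt_of_tendsto' A
    (integrable_mul_exp_neg_mul_sq hb).integrableOn B
  rw [this]
  simp

lemma aux_one_sided (V : ℝ≥0) {a b : ℝ} (hab : a ≤ b) {A : Set ℝ} (hA : MeasurableSet A) :
    (∫ x in A, gaussianPDFReal a V x) - ∫ x in A, gaussianPDFReal b V x
      ≤ (b - a) * (Real.sqrt (2 * π * V))⁻¹ := by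
  set c := (Real.sqrt (2 * π * V))⁻¹ with hcdef
  have hc0 : 0 ≤ c := inv_nonneg.2 (Real.sqrt_nonneg _)
  set m := (a + b) / 2 with hm
  set t := b - a with ht
  have ht0 : 0 ≤ t := by simp [ht]; linarith
  have hint : ∀ (e : ℝ) (S : Set ℝ), IntegrableOn (gaussianPDFReal e V) S volume :=
    fun e S => (integrable_gaussianPDFReal e V).integrableOn
  have hD : ∀ x ∈ Iic m, gaussianPDFReal b V x ≤ gaussianPDFReal a V x := by
    intro x hx
    simp only [mem_Iic, hm] at hx
    exact aux_gpdf_mono V (by nlinarith)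
  have hDc : ∀ x, m ≤ x → gaussianPDFReal a V x ≤ gaussianPDFReal b V x := by
    intro x hx
    simp only [hm] at hx
    exact aux_gpdf_mono V (by nlinarith)
  -- split A
  have splitA : ∀ e : ℝ, (∫ x in A ∩ Iic m, gaussianPDFReal e V x)
      + ∫ x in A \ Iic m, gaussianPDFReal e V x = ∫ x in A, gaussianPDFReal e V x :=
    fun e => integral_inter_add_diff measurableSet_Iic (hint e A)
  have splitD : ∀ e : ℝ, (∫ x in Iic m ∩ A, gaussianPDFReal e V x)
      + ∫ x in Iic m \ A, gaussianPDFReal e V x = ∫ x in Iic m, gaussianPDFReal e V x :=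
    fun e => integral_inter_add_diff hA (hint e _)
  have hAD : ∀ e : ℝ, (∫ x in A ∩ Iic m, gaussianPDFReal e V x)
      = ∫ x in Iic m ∩ A, gaussianPDFReal e V x := fun e => by rw [Set.inter_comm]
  have h2 : (∫ x in A \ Iic m, gaussianPDFReal a V x)
      ≤ ∫ x in A \ Iic m, gaussianPDFReal b V x := by
    apply setIntegral_mono_on (hint a _) (hint b _) (hA.diff measurableSet_Iic)
    exact fun x hx => hDc x (le_of_not_ge hx.2)
  have h3 : (∫ x in Iic m \ A, gaussianPDFReal b V x)
      ≤ ∫ x in Iic m \ A, gaussianPDFReal a V x := by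
    apply setIntegral_mono_on (hint b _) (hint a _) (measurableSet_Iic.diff hA)
    exact fun x hx => hD x hx.1
  -- translation
  have htrans : (∫ x in Iic m, gaussianPDFReal b V x)
      = ∫ x in Iic (m - t), gaussianPDFReal a V x := by
    rw [← integral_indicator measurableSet_Iic, ← integral_indicator measurableSet_Iic]
    have hfun : (Iic m).indicator (gaussianPDFReal b V)
        = fun x => (Iic (m - t)).indicator (gaussianPDFReal a V) (x - t) := by
      funext x
      have hx : x ∈ Iic m ↔ x - t ∈ Iic (m - t) := by
        simp [sub_le_sub_iff_right]
      have hval : gaussianPDFReal b V x = gaussianPDFReal a V (x - t) := by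
        rw [gaussianPDFReal_sub x t]
        congr 1
        simp [ht]
      by_cases h : x ∈ Iic m
      · rw [Set.indicator_of_mem h, Set.indicator_of_mem (hx.1 h), hval]
      · rw [Set.indicator_of_notMem h, Set.indicator_of_notMem (fun hh => h (hx.2 hh))]
    rw [hfun, integral_sub_right_eq_self _ t]
  have htail : (∫ x in Iic m, gaussianPDFReal a V x)
      - ∫ x in Iic (m - t), gaussianPDFReal a V x
      = ∫ x in Ioc (m - t) m, gaussianPDFReal a V x := by
    have hu : Iic (m - t) ∪ Ioc (m - t) m = Iic m := Iic_union_Ioc_eq_Iic (by linarith)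
    rw [← hu, setIntegral_union (Iic_disjoint_Ioc le_rfl) measurableSet_Ioc (hint _ _) (hint _ _)]
    ring
  have hbound : (∫ x in Ioc (m - t) m, gaussianPDFReal a V x) ≤ t * c := by
    calc (∫ x in Ioc (m - t) m, gaussianPDFReal a V x)
        ≤ ∫ _x in Ioc (m - t) m, c := by
          apply setIntegral_mono_on (hint _ _) ?_ measurableSet_Ioc
            (fun x _ => aux_gpdf_le a V x)
          exact integrableOn_const measure_Ioc_lt_top.ne
      _ = (volume (Ioc (m - t) m)).toReal * c := by
          rw [setIntegral_const, smul_eq_mul, measureReal_def]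
      _ = t * c := by
          rw [Real.volume_Ioc, ENNReal.toReal_ofReal (by linarith)]
          congr 1
          ring
  have e1 := splitA a; have e2 := splitA b
  have e3 := splitD a; have e4 := splitD b
  have e5 := hAD a; have e6 := hAD b
  linarith

lemma aux_abs_int (V : ℝ≥0) (hV : V ≠ 0) (a b : ℝ) {A : Set ℝ} (hA : MeasurableSet A) :
    |(∫ x in A, gaussianPDFReal a V x) - ∫ x in A, gaussianPDFReal b V x|
      ≤ |a - b| * (Real.sqrt (2 * π * V))⁻¹ := by
  have hcompl : ∀ e : ℝ, (∫ x in Aᶜ, gaussianPDFReal e V x)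
      = 1 - ∫ x in A, gaussianPDFReal e V x := by
    intro e
    have h1 := integral_add_compl hA (integrable_gaussianPDFReal e V)
    rw [integral_gaussianPDFReal_eq_one e hV] at h1
    linarith
  rcases le_total a b with h | h
  · have hab : |a - b| = b - a := by rw [abs_sub_comm]; exact abs_of_nonneg (by linarith)
    rw [hab, abs_le]
    constructor
    · have := aux_one_sided V h (hA.compl)
      rw [hcompl a, hcompl b] at this
      linarith
    · have := aux_one_sided V h hA
      linarith
  · have hab : |a - b| = a - b := abs_of_nonneg (by linarith)
    rw [hab, abs_le]
    constructor
    · have := aux_one_sided V h hA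
      linarith
    · have := aux_one_sided V h hA.compl
      rw [hcompl a, hcompl b] at this
      linarith

lemma aux_abs_meas (V : ℝ≥0) (hV : V ≠ 0) (a b : ℝ) {A : Set ℝ} (hA : MeasurableSet A) :
    |(gaussianReal a V A).toReal - (gaussianReal b V A).toReal|
      ≤ |a - b| * (Real.sqrt (2 * π * V))⁻¹ := by
  rw [gaussianReal_apply_eq_integral a hV A, gaussianReal_apply_eq_integral b hV A,
    ENNReal.toReal_ofReal (setIntegral_nonneg hA fun x _ => gaussianPDFReal_nonneg a V x),
    ENNReal.toReal_ofReal (setIntegral_nonneg hA fun x _ => gaussianPDFReal_nonneg b V x)]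
  exact aux_abs_int V hV a b hA

lemma aux_moment (W : ℝ≥0) (hW : W ≠ 0) :
    ∫⁻ y, ENNReal.ofReal |y| ∂(gaussianReal 0 W) ≤ ENNReal.ofReal (Real.sqrt W) := by
  have hw : (0:ℝ) < W := by
    have := hW
    positivity
  set k := (Real.sqrt (2 * π * W))⁻¹ with hk
  have hk0 : 0 < k := by rw [hk]; positivity
  set b := (2 * (W:ℝ))⁻¹ with hb
  have hb0 : (0:ℝ) < b := by positivity
  rw [gaussianReal_of_var_ne_zero _ hW,
    lintegral_withDensity_eq_lintegral_mul _ (measurable_gaussianPDF _ _)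
      (measurable_abs.ennreal_ofReal)]
  have hpt : ∀ y : ℝ, (gaussianPDF 0 W * fun y => ENNReal.ofReal |y|) y
      = ENNReal.ofReal (k * (|y| * Real.exp (-b * y ^ 2))) := by
    intro y
    simp only [Pi.mul_apply, gaussianPDF]
    rw [← ENNReal.ofReal_mul (gaussianPDFReal_nonneg _ _ _)]
    congr 1
    unfold gaussianPDFReal
    rw [hk, hb]
    rw [sub_zero]
    ring_nf
  rw [lintegral_congr hpt]
  have hInt : Integrable (fun y : ℝ => k * (|y| * Real.exp (-b * y ^ 2))) := by
    have h1 : Integrable (fun y : ℝ => y * Real.exp (-b * y ^ 2)) :=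
      integrable_mul_exp_neg_mul_sq hb0
    have h2 := (h1.abs).const_mul k
    convert h2 using 2 with y
    rw [abs_mul, abs_of_pos (Real.exp_pos _)]
  rw [← ofReal_integral_eq_lintegral_ofReal hInt
    (ae_of_all _ fun y => by positivity)]
  apply ENNReal.ofReal_le_ofReal
  rw [integral_const_mul]
  have habs : (∫ y : ℝ, |y| * Real.exp (-b * y ^ 2))
      = 2 * ∫ x in Ioi (0:ℝ), x * Real.exp (-b * x ^ 2) := by
    rw [← integral_comp_abs (f := fun t => t * Real.exp (-b * t ^ 2))]
    congr 1 with y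
    rw [sq_abs]
  rw [habs, aux_int_Ioi hb0]
  have hval : (2:ℝ) * (2 * b)⁻¹ = 2 * W := by
    rw [hb]
    field_simp
  rw [hval]
  -- k * (2W) ≤ √W
  have hsplit : Real.sqrt (2 * π * W) = Real.sqrt (2 * π) * Real.sqrt W := by
    rw [← Real.sqrt_mul (by positivity)]
  have h2pi : (2:ℝ) ≤ Real.sqrt (2 * π) := by
    have : (4:ℝ) ≤ 2 * π := by nlinarith [Real.pi_gt_three]
    nlinarith [Real.sq_sqrt (by positivity : (0:ℝ) ≤ 2 * π), Real.sqrt_nonneg (2 * π)]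
  have hkle : k ≤ (2 * Real.sqrt W)⁻¹ := by
    rw [hk, hsplit]
    apply inv_anti₀ (by positivity)
    apply mul_le_mul_of_nonneg_right h2pi (Real.sqrt_nonneg _)
  have hWs : Real.sqrt W ≠ 0 := by positivity
  calc k * (2 * W) ≤ (2 * Real.sqrt W)⁻¹ * (2 * W) :=
        mul_le_mul_of_nonneg_right hkle (by positivity)
    _ = (W:ℝ) / Real.sqrt W := by
        rw [mul_inv]
        field_simp
    _ = Real.sqrt W := Real.div_sqrt

lemma aux_le_add_ofReal {x y : ℝ≥0∞} (hx : x ≠ ⊤) (hy : y ≠ ⊤) {ε : ℝ}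
    (h : x.toReal ≤ y.toReal + ε) : x ≤ y + ENNReal.ofReal ε := by
  calc x = ENNReal.ofReal x.toReal := (ENNReal.ofReal_toReal hx).symm
    _ ≤ ENNReal.ofReal (y.toReal + ε) := ENNReal.ofReal_le_ofReal h
    _ ≤ ENNReal.ofReal y.toReal + ENNReal.ofReal ε := ENNReal.ofReal_add_le
    _ = y + ENNReal.ofReal ε := by rw [ENNReal.ofReal_toReal hy]

lemma aux_abs_of_ennreal {x y : ℝ≥0∞} (hx : x ≠ ⊤) (hy : y ≠ ⊤) {ε : ℝ} (hε : 0 ≤ ε)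
    (h1 : x ≤ y + ENNReal.ofReal ε) (h2 : y ≤ x + ENNReal.ofReal ε) :
    |x.toReal - y.toReal| ≤ ε := by
  rw [abs_sub_le_iff]
  constructor
  · have := ENNReal.toReal_mono (by finiteness) h1
    rw [ENNReal.toReal_add hy ENNReal.ofReal_ne_top, ENNReal.toReal_ofReal hε] at this
    linarith
  · have := ENNReal.toReal_mono (by finiteness) h2
    rw [ENNReal.toReal_add hx ENNReal.ofReal_ne_top, ENNReal.toReal_ofReal hε] at this
    linarith

-- rate bound

lemma aux_rate {n : ℕ} (hn : 1 ≤ n) :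
    Real.sqrt ((Real.toNNReal (1 / (2 * Real.sqrt n)) : ℝ≥0) : ℝ)
      ≤ (n : ℝ) ^ (-(1:ℝ) / 4) := by
  have hn0 : (0:ℝ) < n := by exact_mod_cast Nat.lt_of_lt_of_le Nat.zero_lt_one hn
  have hsn : (0:ℝ) < Real.sqrt n := Real.sqrt_pos.2 hn0
  have hcoe : ((Real.toNNReal (1 / (2 * Real.sqrt n)) : ℝ≥0) : ℝ) = 1 / (2 * Real.sqrt n) :=
    Real.coe_toNNReal _ (by positivity)
  rw [hcoe]
  have h1 : (1:ℝ) / (2 * Real.sqrt n) ≤ (Real.sqrt n)⁻¹ := by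
    rw [one_div]
    apply inv_anti₀ hsn
    linarith
  calc Real.sqrt (1 / (2 * Real.sqrt n)) ≤ Real.sqrt ((Real.sqrt n)⁻¹) :=
        Real.sqrt_le_sqrt h1
    _ = (n : ℝ) ^ (-(1:ℝ) / 4) := by
        rw [Real.sqrt_inv, Real.sqrt_eq_rpow, Real.sqrt_eq_rpow, ← Real.rpow_mul hn0.le,
          ← Real.rpow_neg hn0.le]
        norm_num

set_option maxHeartbeats 1000000 in
/-- Gaussian smoothing preserves total-variation convergence: if the laws `μ n` of `g_n`
converge in total variation to `N(u, s²)` at rate `r n`, then the laws obtained by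
convolving with the Gaussian kernel `Δ_n` of mean `0` and variance `1/(2√n)`
(i.e. smoothing `g_n` with the density `n^{1/4}/√π · exp(-√n (x-g)²)`)
converge in total variation to `N(u, s²)` at rate `O(r n + n^{-1/4})`. -/
theorem stmt8 (u : ℝ) (s : ℝ) (hs : 0 < s)
    (μ : ℕ → Measure ℝ) (hprob : ∀ n, IsProbabilityMeasure (μ n))
    (r : ℕ → ℝ) (hr : ∀ n, 0 ≤ r n)
    (hTV : ∀ n, ∀ A : Set ℝ, MeasurableSet A →
      |(μ n A).toReal - (gaussianReal u ⟨s ^ 2, sq_nonneg s⟩ A).toReal| ≤ r n) :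
    ∃ C > (0 : ℝ), ∀ n : ℕ, 1 ≤ n → ∀ A : Set ℝ, MeasurableSet A →
      |(((μ n).conv (gaussianReal 0 (Real.toNNReal (1 / (2 * Real.sqrt n))))) A).toReal
          - (gaussianReal u ⟨s ^ 2, sq_nonneg s⟩ A).toReal|
        ≤ C * (r n + (n : ℝ) ^ (-(1 : ℝ) / 4)) := by
  set V : ℝ≥0 := ⟨s ^ 2, sq_nonneg s⟩ with hVdef
  have hV : V ≠ 0 := by
    intro h
    have : (V : ℝ) = 0 := by rw [h]; simp
    rw [hVdef] at this
    change s ^ 2 = 0 at this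
    nlinarith
  set c : ℝ := (Real.sqrt (2 * π * V))⁻¹ with hcdef
  have hc0 : 0 ≤ c := inv_nonneg.2 (Real.sqrt_nonneg _)
  refine ⟨1 + c, by positivity, ?_⟩
  intro n hn A hA
  set ν : Measure ℝ := gaussianReal u V with hν
  set W : ℝ≥0 := Real.toNNReal (1 / (2 * Real.sqrt n)) with hWdef
  have hn0 : (0:ℝ) < n := by exact_mod_cast Nat.lt_of_lt_of_le Nat.zero_lt_one hn
  have hW : W ≠ 0 := by
    rw [hWdef]
    simp only [ne_eq, Real.toNNReal_eq_zero, not_le]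
    have : (0:ℝ) < Real.sqrt n := Real.sqrt_pos.2 hn0
    positivity
  set Δ : Measure ℝ := gaussianReal 0 W with hΔ
  haveI : IsProbabilityMeasure (μ n) := hprob n
  set t4 : ℝ := (n : ℝ) ^ (-(1:ℝ) / 4) with ht4
  have ht40 : 0 ≤ t4 := Real.rpow_nonneg hn0.le _
  -- expansion of convolution
  have hadd : Measurable (fun p : ℝ × ℝ => p.1 + p.2) := measurable_fst.add measurable_snd
  have hconv : ((μ n).conv Δ) A = ∫⁻ y, μ n ((fun x => x + y) ⁻¹' A) ∂Δ := by
    have h1 : (μ n).conv Δ = Measure.map (fun p : ℝ × ℝ => p.1 + p.2) ((μ n).prod Δ) := rfl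
    rw [h1, Measure.map_apply hadd hA, Measure.prod_apply_symm (hadd hA)]
    rfl
  have hmeas : Measurable fun y => μ n ((fun x => x + y) ⁻¹' A) :=
    measurable_measure_prodMk_right (hadd hA)
  -- pointwise bound
  have hpoint : ∀ y : ℝ, |(μ n ((fun x => x + y) ⁻¹' A)).toReal - (ν A).toReal|
      ≤ r n + c * |y| := by
    intro y
    have hBy : MeasurableSet ((fun x => x + y) ⁻¹' A) := (measurable_add_const y) hA
    have h1 := hTV n _ hBy
    have h2 : ν ((fun x => x + y) ⁻¹' A) = gaussianReal (u + y) V A := by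
      rw [hν, ← Measure.map_apply (measurable_add_const y) hA, gaussianReal_map_add_const]
    have h3 : |(gaussianReal (u + y) V A).toReal - (ν A).toReal| ≤ c * |y| := by
      have h4 := aux_abs_meas V hV (u + y) u hA
      rw [show u + y - u = y from by ring] at h4
      rw [mul_comm]
      exact h4
    calc |(μ n ((fun x => x + y) ⁻¹' A)).toReal - (ν A).toReal|
        ≤ |(μ n ((fun x => x + y) ⁻¹' A)).toReal - (ν ((fun x => x + y) ⁻¹' A)).toReal|
          + |(ν ((fun x => x + y) ⁻¹' A)).toReal - (ν A).toReal| := abs_sub_le _ _ _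
      _ ≤ r n + c * |y| := by
          rw [h2] at h1 ⊢
          exact add_le_add h1 h3
  -- ENNReal pointwise
  have hfin : ∀ (ρ : Measure ℝ) [IsProbabilityMeasure ρ] (S : Set ℝ), ρ S ≠ ⊤ :=
    fun ρ _ S => measure_ne_top ρ S
  have hEpt : ∀ y : ℝ,
      μ n ((fun x => x + y) ⁻¹' A) ≤ ν A + ENNReal.ofReal (r n + c * |y|)
      ∧ ν A ≤ μ n ((fun x => x + y) ⁻¹' A) + ENNReal.ofReal (r n + c * |y|) := by
    intro y
    have h := hpoint y
    rw [abs_sub_le_iff] at h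
    exact ⟨aux_le_add_ofReal (measure_ne_top _ _) (measure_ne_top _ _) (by linarith [h.1]),
      aux_le_add_ofReal (measure_ne_top _ _) (measure_ne_top _ _) (by linarith [h.2])⟩
  -- integral of the error term
  set M : ℝ≥0∞ := ∫⁻ y, ENNReal.ofReal |y| ∂Δ with hM
  have herr : (∫⁻ y, ENNReal.ofReal (r n + c * |y|) ∂Δ) ≤ ENNReal.ofReal (r n + c * t4) := by
    have hptw : ∀ y : ℝ, ENNReal.ofReal (r n + c * |y|)
        ≤ ENNReal.ofReal (r n) + ENNReal.ofReal c * ENNReal.ofReal |y| := by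
      intro y
      rw [← ENNReal.ofReal_mul hc0]
      exact ENNReal.ofReal_add_le
    calc (∫⁻ y, ENNReal.ofReal (r n + c * |y|) ∂Δ)
        ≤ ∫⁻ y, (ENNReal.ofReal (r n) + ENNReal.ofReal c * ENNReal.ofReal |y|) ∂Δ :=
          lintegral_mono hptw
      _ = ENNReal.ofReal (r n) + ENNReal.ofReal c * M := by
          rw [lintegral_add_left measurable_const, lintegral_const, measure_univ, mul_one,
            lintegral_const_mul _ (measurable_abs.ennreal_ofReal)]
      _ ≤ ENNReal.ofReal (r n) + ENNReal.ofReal c * ENNReal.ofReal t4 := by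
          apply add_le_add_right
          refine mul_le_mul_of_nonneg_left ?_ zero_le
          calc M ≤ ENNReal.ofReal (Real.sqrt W) := aux_moment W hW
            _ ≤ ENNReal.ofReal t4 := ENNReal.ofReal_le_ofReal (aux_rate hn)
      _ = ENNReal.ofReal (r n + c * t4) := by
          rw [← ENNReal.ofReal_mul hc0, ← ENNReal.ofReal_add (hr n) (by positivity)]
  -- upper bound
  have hup : ((μ n).conv Δ) A ≤ ν A + ENNReal.ofReal (r n + c * t4) := by
    rw [hconv]
    calc (∫⁻ y, μ n ((fun x => x + y) ⁻¹' A) ∂Δ)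
        ≤ ∫⁻ y, (ν A + ENNReal.ofReal (r n + c * |y|)) ∂Δ :=
          lintegral_mono fun y => (hEpt y).1
      _ = ν A + ∫⁻ y, ENNReal.ofReal (r n + c * |y|) ∂Δ := by
          rw [lintegral_add_left measurable_const, lintegral_const, measure_univ, mul_one]
      _ ≤ ν A + ENNReal.ofReal (r n + c * t4) := add_le_add_right herr _
  have hdown : ν A ≤ ((μ n).conv Δ) A + ENNReal.ofReal (r n + c * t4) := by
    have h0 : ν A = ∫⁻ _y, ν A ∂Δ := by
      rw [lintegral_const, measure_univ, mul_one]
    rw [h0, hconv]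
    calc (∫⁻ _y, ν A ∂Δ)
        ≤ ∫⁻ y, (μ n ((fun x => x + y) ⁻¹' A) + ENNReal.ofReal (r n + c * |y|)) ∂Δ :=
          lintegral_mono fun y => (hEpt y).2
      _ = (∫⁻ y, μ n ((fun x => x + y) ⁻¹' A) ∂Δ)
          + ∫⁻ y, ENNReal.ofReal (r n + c * |y|) ∂Δ := lintegral_add_left hmeas _
      _ ≤ (∫⁻ y, μ n ((fun x => x + y) ⁻¹' A) ∂Δ) + ENNReal.ofReal (r n + c * t4) :=
          add_le_add_right herr _
  -- conclude
  have habs := aux_abs_of_ennreal (measure_ne_top _ _) (measure_ne_top _ _)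
    (add_nonneg (hr n) (mul_nonneg hc0 ht40)) hup hdown
  refine habs.trans ?_
  nlinarith [hr n, ht40, hc0]
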